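/- Let 0 < α < n and let k be an integer with 1 < k < n/α. Set Φ_k(t) = t log(e+t)^{2k−1} and A_k(t) = t^k log(e+t)^{2k−1}, and let B be any Young function. Then for every weight u with M_{Φ_k, kα} u finite a.e., the pair (u, M_{Φ_k, kα} u) satisfies sup_Q |Q|^{α/n} ‖u^{1/k}‖_{A_k,Q} ‖(M_{Φ_k, kα} u)^{−1/k}‖_{B,Q} < ∞, the supremum over all cubes Q; that is, this pair satisfies the two-weight bump condition of the two-weight theorem for [b,I_α] (with p = q = k) with the exponent δ = 0 on the logarithm in A_k. -/

import Mathlib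

noncomputable section

open MeasureTheory Real Set Filter
open scoped ENNReal NNReal Topology

/-- `ℝⁿ` with the Euclidean norm. -/
abbrev Rn (n : ℕ) : Type := EuclideanSpace ℝ (Fin n)

namespace Paper

variable {n : ℕ}

/-- The axis-parallel closed cube with lower corner `c` and side length `h`;
its volume is `h ^ n`. -/
def Cube (c : Rn n) (h : ℝ) : Set (Rn n) := {x | ∀ i, c i ≤ x i ∧ x i ≤ c i + h}

/-- Mean value of `f` over the cube with lower corner `c` and side length `h`. -/
def cubeAvg (c : Rn n) (h : ℝ) (f : Rn n → ℝ) : ℝ := (1 / h ^ n) * ∫ x in Cube c h, f x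

/-- The BMO norm of `b` : the supremum over all cubes of the mean oscillation. -/
def bmoNorm (b : Rn n → ℝ) : ℝ≥0∞ :=
  ⨆ (c : Rn n) (h : ℝ) (_ : 0 < h),
    ENNReal.ofReal (cubeAvg c h fun x => |b x - cubeAvg c h b|)

/-- Normalized Luxemburg norm of `f` with respect to the Young function `Φ`
over a set `Q` of measure `vol`. -/
def luxNormOn (Φ : ℝ → ℝ) (Q : Set (Rn n)) (vol : ℝ) (f : Rn n → ℝ) : ℝ :=
  sInf {lam : ℝ | 0 < lam ∧ (1 / vol) * ∫ x in Q, Φ (|f x| / lam) ≤ 1}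

/-- Normalized Luxemburg norm over the cube with corner `c` and side `h`. -/
def luxNorm (Φ : ℝ → ℝ) (c : Rn n) (h : ℝ) (f : Rn n → ℝ) : ℝ :=
  luxNormOn Φ (Cube c h) (h ^ n) f

/-- `(∫ |f|^p w)^(1/p)`, the norm of `f` in `L^p(w)`, as an extended real. -/
def wLpNorm (p : ℝ) (w : Rn n → ℝ) (f : Rn n → ℝ) : ℝ≥0∞ :=
  (∫⁻ x, ENNReal.ofReal (|f x| ^ p * w x)) ^ (1 / p)

/-- The unweighted `L^p` norm. -/
def lpNorm (p : ℝ) (f : Rn n → ℝ) : ℝ≥0∞ :=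
  (∫⁻ x, ENNReal.ofReal (|f x| ^ p)) ^ (1 / p)

/-- The commutator `[b,T] f = b · Tf − T(bf)`. -/
def commutator (b : Rn n → ℝ) (T : (Rn n → ℝ) → Rn n → ℝ) (f : Rn n → ℝ) (x : Rn n) : ℝ :=
  b x * T f x - T (fun y => b y * f y) x

/-- The fractional integral `I_α f(x) = ∫ f(y) |x−y|^{α−n} dy`. -/
def fracInt (α : ℝ) (f : Rn n → ℝ) (x : Rn n) : ℝ :=
  ∫ y, f y / ‖x - y‖ ^ ((n : ℝ) - α)

/-- The fractional integral of a nonnegative function, with values in `[0,∞]`. -/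
def fracIntL (α : ℝ) (f : Rn n → ℝ) (x : Rn n) : ℝ≥0∞ :=
  ∫⁻ y, ENNReal.ofReal (f y) * ENNReal.ofReal (‖x - y‖ ^ (α - (n : ℝ)))

/-- The `A_{p,q}` constant of a weight `w` (with the usual modification for `p = 1`). -/
def apqConst (p q : ℝ) (w : Rn n → ℝ) : ℝ≥0∞ :=
  if p = 1 then
    ⨆ (c : Rn n) (h : ℝ) (_ : 0 < h),
      ENNReal.ofReal (cubeAvg c h fun x => w x ^ q) *
        (essSup (fun x => ENNReal.ofReal ((w x)⁻¹)) (volume.restrict (Cube c h))) ^ q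
  else
    ⨆ (c : Rn n) (h : ℝ) (_ : 0 < h),
      ENNReal.ofReal ((cubeAvg c h fun x => w x ^ q) *
        (cubeAvg c h fun x => w x ^ (-(p / (p - 1)))) ^ (q / (p / (p - 1))))

/-- The dyadic cube `2^k (m + [0,1)^n)`. -/
def dyadicCube (k : ℤ) (m : Fin n → ℤ) : Set (Rn n) :=
  {x | ∀ i, (2 : ℝ) ^ k * (m i : ℝ) ≤ x i ∧ x i < (2 : ℝ) ^ k * ((m i : ℝ) + 1)}

/-- A dyadic singular integral operator of order `τ`:
`T f = Σ_{Q ∈ 𝒟} ⟨f, h_Q⟩ g_Q` where `h_Q, g_Q` are supported on `Q`, constant on dyadic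
subcubes of `Q` of measure at most `2^{-τ n} |Q|`, bounded by `|Q|^{-1/2}`, and have mean zero. -/
structure DyadicSIO (n : ℕ) (τ : ℕ) where
  hQ : ℤ → (Fin n → ℤ) → Rn n → ℝ
  gQ : ℤ → (Fin n → ℤ) → Rn n → ℝ
  supp_hQ : ∀ k m x, x ∉ dyadicCube k m → hQ k m x = 0
  supp_gQ : ∀ k m x, x ∉ dyadicCube k m → gQ k m x = 0
  const_hQ : ∀ k m k' m', dyadicCube (n := n) k' m' ⊆ dyadicCube k m → k' ≤ k - τ →
    ∀ x ∈ dyadicCube (n := n) k' m', ∀ y ∈ dyadicCube (n := n) k' m', hQ k m x = hQ k m y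
  const_gQ : ∀ k m k' m', dyadicCube (n := n) k' m' ⊆ dyadicCube k m → k' ≤ k - τ →
    ∀ x ∈ dyadicCube (n := n) k' m', ∀ y ∈ dyadicCube (n := n) k' m', gQ k m x = gQ k m y
  bound_hQ : ∀ k m x, |hQ k m x| ≤ (Real.sqrt (((2 : ℝ) ^ k) ^ n))⁻¹
  bound_gQ : ∀ k m x, |gQ k m x| ≤ (Real.sqrt (((2 : ℝ) ^ k) ^ n))⁻¹
  mean_hQ : ∀ k m, ∫ x in dyadicCube (n := n) k m, hQ k m x = 0
  mean_gQ : ∀ k m, ∫ x in dyadicCube (n := n) k m, gQ k m x = 0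

/-- The action of a dyadic singular integral operator. -/
def DyadicSIO.apply {τ : ℕ} (T : DyadicSIO n τ) (f : Rn n → ℝ) (x : Rn n) : ℝ :=
  ∑' (k : ℤ) (m : Fin n → ℤ), (∫ y, f y * T.hQ k m y) * T.gQ k m x

/-- The truncation of a dyadic singular integral operator to cubes of measure `≥ 2^{nl}`. -/
def DyadicSIO.trunc {τ : ℕ} (T : DyadicSIO n τ) (l : ℤ) (f : Rn n → ℝ) (x : Rn n) : ℝ :=
  ∑' (k : ℤ) (m : Fin n → ℤ),
    if l ≤ k then (∫ y, f y * T.hQ k m y) * T.gQ k m x else 0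

/-- The maximal truncated dyadic singular integral operator. -/
def DyadicSIO.star {τ : ℕ} (T : DyadicSIO n τ) (f : Rn n → ℝ) (x : Rn n) : ℝ≥0∞ :=
  ⨆ l : ℤ, ENNReal.ofReal |T.trunc l f x|

/-- The Hardy–Littlewood maximal operator (over axis-parallel cubes). -/
def maxOp (f : Rn n → ℝ) (x : Rn n) : ℝ :=
  sSup {r : ℝ | ∃ c h, 0 < h ∧ x ∈ Cube c h ∧ r = cubeAvg c h fun y => |f y|}

/-- The fractional maximal operator `M_β`. -/
def fracMaxOp (β : ℝ) (f : Rn n → ℝ) (x : Rn n) : ℝ :=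
  sSup {r : ℝ | ∃ c h, 0 < h ∧ x ∈ Cube c h ∧
    r = (h ^ n) ^ (β / (n : ℝ)) * cubeAvg c h fun y => |f y|}

/-- The Orlicz maximal operator `M_Φ`. -/
def orliczMax (Φ : ℝ → ℝ) (f : Rn n → ℝ) (x : Rn n) : ℝ≥0∞ :=
  ⨆ (c : Rn n) (h : ℝ) (_ : 0 < h) (_ : x ∈ Cube c h), ENNReal.ofReal (luxNorm Φ c h f)

/-- The fractional Orlicz maximal operator `M_{Φ,β}`. -/
def fracOrliczMax (β : ℝ) (Φ : ℝ → ℝ) (f : Rn n → ℝ) (x : Rn n) : ℝ≥0∞ :=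
  ⨆ (c : Rn n) (h : ℝ) (_ : 0 < h) (_ : x ∈ Cube c h),
    ENNReal.ofReal ((h ^ n) ^ (β / (n : ℝ)) * luxNorm Φ c h f)

/-- The dyadic Hardy–Littlewood maximal operator. -/
def dyadMax (f : Rn n → ℝ) (x : Rn n) : ℝ≥0∞ :=
  ⨆ (k : ℤ) (m : Fin n → ℤ) (_ : x ∈ dyadicCube k m),
    ENNReal.ofReal ((1 / ((2 : ℝ) ^ k) ^ n) * ∫ y in dyadicCube (n := n) k m, |f y|)

/-- The Young function `t ↦ t log(e+t)`. -/
def LlogL (t : ℝ) : ℝ := t * Real.log (Real.exp 1 + t)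

/-- The dyadic `L log L` maximal operator. -/
def dyadMaxLlogL (f : Rn n → ℝ) (x : Rn n) : ℝ≥0∞ :=
  ⨆ (k : ℤ) (m : Fin n → ℤ) (_ : x ∈ dyadicCube k m),
    ENNReal.ofReal (luxNormOn LlogL (dyadicCube k m) (((2 : ℝ) ^ k) ^ n) f)

/-- The decreasing rearrangement `g^*(t) = inf { s > 0 : |{ |g| > s }| ≤ t }`. -/
def rearr (g : Rn n → ℝ) (t : ℝ) : ℝ :=
  sInf {s : ℝ | 0 < s ∧ volume {x | s < |g x|} ≤ ENNReal.ofReal t}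

/-- The local mean oscillation `ω_λ(f; Q) = inf_c ((f−c) χ_Q)^*(λ |Q|)`,
where `vol` is the measure of `Q`. -/
def oscLoc (lam : ℝ) (f : Rn n → ℝ) (Q : Set (Rn n)) (vol : ℝ) : ℝ :=
  sInf {r : ℝ | ∃ c₀ : ℝ, r = rearr (Q.indicator fun x => f x - c₀) (lam * vol)}

/-- The local dyadic sharp maximal function `M^{♯,d}_{λ,Q}` relative to the
dyadic cube indexed by `(k, m)`. -/
def dyadSharpMax (lam : ℝ) (k : ℤ) (m : Fin n → ℤ) (f : Rn n → ℝ) (x : Rn n) : ℝ≥0∞ :=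
  ⨆ (k' : ℤ) (m' : Fin n → ℤ) (_ : x ∈ dyadicCube k' m')
      (_ : dyadicCube (n := n) k' m' ⊆ dyadicCube k m),
    ENNReal.ofReal (oscLoc lam f (dyadicCube k' m') (((2 : ℝ) ^ k') ^ n))

/-- A Young function: continuous, convex, strictly increasing on `[0,∞)`,
vanishing at `0`, and superlinear at infinity. -/
def IsYoung (Φ : ℝ → ℝ) : Prop :=
  ContinuousOn Φ (Ici 0) ∧ ConvexOn ℝ (Ici 0) Φ ∧ StrictMonoOn Φ (Ici 0) ∧
    Φ 0 = 0 ∧ Tendsto (fun t => Φ t / t) atTop atTop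

/-- The surface measure of the unit sphere `𝕊^{n-1}` in `ℝⁿ`. -/
def sphereArea (n : ℕ) : ℝ := n * (volume (Metric.ball (0 : Rn n) 1)).toReal

/-- The associate Young function `Φ̄(t) = sup_{s > 0} (s t − Φ(s))`. -/
def assocFn (Φ : ℝ → ℝ) (t : ℝ) : ℝ := sSup {r : ℝ | ∃ s, 0 < s ∧ r = s * t - Φ s}

/-- The generalized inverse `Φ^{-1}(t) = inf { s ≥ 0 : Φ(s) ≥ t }`. -/
def genInv (Φ : ℝ → ℝ) (t : ℝ) : ℝ := sInf {s : ℝ | 0 ≤ s ∧ t ≤ Φ s}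

/-- A Calderón–Zygmund operator on `ℝⁿ`. -/
structure CZO (n : ℕ) where
  T : (Rn n → ℝ) → Rn n → ℝ
  K : Rn n → Rn n → ℝ
  C₀ : ℝ
  ε : ℝ
  C₂ : ℝ
  C₀_pos : 0 < C₀
  ε_pos : 0 < ε
  ε_le_one : ε ≤ 1
  map_add : ∀ f g : Rn n → ℝ, T (f + g) = T f + T g
  map_smul : ∀ (a : ℝ) (f : Rn n → ℝ), T (a • f) = a • T f
  l2_bound : ∀ f : Rn n → ℝ, MemLp f 2 volume →
    eLpNorm (T f) 2 volume ≤ ENNReal.ofReal C₂ * eLpNorm f 2 volume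
  size : ∀ x y : Rn n, x ≠ y → |K x y| ≤ C₀ * ‖x - y‖ ^ (-(n : ℝ))
  smooth : ∀ x x' y : Rn n, x ≠ y → x' ≠ y → ‖x - x'‖ ≤ ‖x - y‖ / 2 →
    |K x y - K x' y| + |K y x - K y x'| ≤ C₀ * ‖x - x'‖ ^ ε * ‖x - y‖ ^ (-(n : ℝ) - ε)
  repr : ∀ f : Rn n → ℝ, (∃ M, ∀ x, |f x| ≤ M) → HasCompactSupport f →
    ∀ᵐ x, x ∉ tsupport f → T f x = ∫ y, K x y * f y

end Paper
namespace Paper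



private lemma exp_one_ge_two : (2:ℝ) ≤ Real.exp 1 := by
  have := Real.add_one_le_exp 1; linarith

private lemma one_le_logE {t : ℝ} (ht : 0 ≤ t) : 1 ≤ Real.log (Real.exp 1 + t) := by
  have h1 : Real.exp 1 ≤ Real.exp 1 + t := by linarith
  calc (1:ℝ) = Real.log (Real.exp 1) := (Real.log_exp 1).symm
    _ ≤ _ := Real.log_le_log (Real.exp_pos 1) h1

private lemma logE_nonneg {t : ℝ} (ht : 0 ≤ t) : 0 ≤ Real.log (Real.exp 1 + t) :=
  le_trans zero_le_one (one_le_logE ht)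

private lemma logE_mono {a b : ℝ} (ha : 0 ≤ a) (hab : a ≤ b) :
    Real.log (Real.exp 1 + a) ≤ Real.log (Real.exp 1 + b) := by
  have := Real.exp_pos 1
  exact Real.log_le_log (by linarith) (by linarith)

/-- fact (e): `log(e+t) ≤ (1+log M) log(e+t/M)` for `M ≥ 1`, `t ≥ 0`. -/
private lemma logE_le_div {M t : ℝ} (hM : 1 ≤ M) (ht : 0 ≤ t) :
    Real.log (Real.exp 1 + t) ≤ (1 + Real.log M) * Real.log (Real.exp 1 + t / M) := by
  have hM0 : 0 < M := lt_of_lt_of_le zero_lt_one hM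
  have he := Real.exp_pos 1
  have htM : 0 ≤ t / M := div_nonneg ht hM0.le
  have h1 : Real.exp 1 + t ≤ M * (Real.exp 1 + t / M) := by
    rw [mul_add, mul_div_cancel₀ _ hM0.ne']
    nlinarith
  have h2 : Real.log (Real.exp 1 + t) ≤ Real.log M + Real.log (Real.exp 1 + t / M) := by
    calc Real.log (Real.exp 1 + t) ≤ Real.log (M * (Real.exp 1 + t / M)) :=
          Real.log_le_log (by linarith) h1
      _ = Real.log M + Real.log (Real.exp 1 + t / M) :=
          Real.log_mul hM0.ne' (by positivity)
  have h3 : 1 ≤ Real.log (Real.exp 1 + t / M) := one_le_logE htM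
  have h4 : 0 ≤ Real.log M := Real.log_nonneg hM
  nlinarith

/-- fact (f): `log(e+t) ≤ k log(e+t^{1/k})`. -/
private lemma logE_le_k_rpow_inv {k : ℕ} (hk : k ≠ 0) {t : ℝ} (ht : 0 ≤ t) :
    Real.log (Real.exp 1 + t) ≤ (k:ℝ) * Real.log (Real.exp 1 + t ^ (1/(k:ℝ))) := by
  have hk0 : (k:ℝ) ≠ 0 := Nat.cast_ne_zero.mpr hk
  set s := t ^ (1/(k:ℝ)) with hs
  have hs0 : 0 ≤ s := Real.rpow_nonneg ht _
  have hsk : s ^ k = t := by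
    rw [hs, ← Real.rpow_natCast (t ^ (1/(k:ℝ))) k, ← Real.rpow_mul ht,
      one_div, inv_mul_cancel₀ hk0, Real.rpow_one]
  have he1 : (1:ℝ) ≤ Real.exp 1 := by linarith [exp_one_ge_two]
  have h1 : Real.exp 1 + t ≤ (Real.exp 1 + s) ^ k := by
    have h2 := pow_add_pow_le (le_of_lt (Real.exp_pos 1)) hs0 hk
    have h3 : Real.exp 1 ≤ Real.exp 1 ^ k := le_self_pow₀ he1 hk
    rw [← hsk]; linarith
  calc Real.log (Real.exp 1 + t) ≤ Real.log ((Real.exp 1 + s) ^ k) :=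
        Real.log_le_log (by linarith [Real.exp_pos 1]) h1
    _ = (k:ℝ) * Real.log (Real.exp 1 + s) := Real.log_pow _ k

/-- fact (g): `log(e+s^k) ≤ k log(e+s)`. -/
private lemma logE_rpow_le_k {k : ℕ} (hk : k ≠ 0) {s : ℝ} (hs : 0 ≤ s) :
    Real.log (Real.exp 1 + s ^ (k:ℝ)) ≤ (k:ℝ) * Real.log (Real.exp 1 + s) := by
  have he1 : (1:ℝ) ≤ Real.exp 1 := by linarith [exp_one_ge_two]
  rw [Real.rpow_natCast]
  have h1 : Real.exp 1 + s ^ k ≤ (Real.exp 1 + s) ^ k := by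
    have h2 := pow_add_pow_le (le_of_lt (Real.exp_pos 1)) hs hk
    have h3 : Real.exp 1 ≤ Real.exp 1 ^ k := le_self_pow₀ he1 hk
    linarith
  calc Real.log (Real.exp 1 + s ^ k) ≤ Real.log ((Real.exp 1 + s) ^ k) :=
        Real.log_le_log (by positivity) h1
    _ = (k:ℝ) * Real.log (Real.exp 1 + s) := Real.log_pow _ k

/-- fact (b): `log(e + t^{1/k}) ≤ 2 log(e+t)`. -/
private lemma logE_rpow_inv_le_two {k : ℕ} (hk : k ≠ 0) {t : ℝ} (ht : 0 ≤ t) :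
    Real.log (Real.exp 1 + t ^ (1/(k:ℝ))) ≤ 2 * Real.log (Real.exp 1 + t) := by
  have he2 := exp_one_ge_two
  have hk1 : 1 ≤ (k:ℝ) := by exact_mod_cast Nat.one_le_iff_ne_zero.mpr hk
  have hs0 : 0 ≤ t ^ (1/(k:ℝ)) := Real.rpow_nonneg ht _
  have h1 : t ^ (1/(k:ℝ)) ≤ 1 + t := by
    rcases le_total t 1 with h | h
    · have := Real.rpow_le_one ht h (by positivity : (0:ℝ) ≤ 1/(k:ℝ)); linarith
    · have h2 : t ^ (1/(k:ℝ)) ≤ t ^ (1:ℝ) :=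
        Real.rpow_le_rpow_of_exponent_le h (by rw [div_le_one] <;> linarith)
      rw [Real.rpow_one] at h2; linarith
  have h2 : Real.exp 1 + t ^ (1/(k:ℝ)) ≤ Real.exp 1 * (Real.exp 1 + t) := by nlinarith
  calc Real.log (Real.exp 1 + t ^ (1/(k:ℝ)))
      ≤ Real.log (Real.exp 1 * (Real.exp 1 + t)) := Real.log_le_log (by positivity) h2
    _ = 1 + Real.log (Real.exp 1 + t) := by
        rw [Real.log_mul (Real.exp_ne_zero 1) (by positivity), Real.log_exp]
    _ ≤ 2 * Real.log (Real.exp 1 + t) := by linarith [one_le_logE ht]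

/-- fact (h): `log(e+s) ≤ 2 log(e+s^k)`. -/
private lemma logE_le_two_rpow {k : ℕ} (hk : k ≠ 0) {s : ℝ} (hs : 0 ≤ s) :
    Real.log (Real.exp 1 + s) ≤ 2 * Real.log (Real.exp 1 + s ^ (k:ℝ)) := by
  have he2 := exp_one_ge_two
  have hk1 : (1:ℝ) ≤ (k:ℝ) := by exact_mod_cast Nat.one_le_iff_ne_zero.mpr hk
  have hsk0 : 0 ≤ s ^ (k:ℝ) := Real.rpow_nonneg hs _
  rcases le_total s 1 with h | h
  · have h1 : Real.log (Real.exp 1 + s) ≤ Real.log (Real.exp 1 * Real.exp 1) := by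
      apply Real.log_le_log (by positivity); nlinarith
    rw [Real.log_mul (Real.exp_ne_zero 1) (Real.exp_ne_zero 1), Real.log_exp] at h1
    linarith [one_le_logE hsk0]
  · have h1 : s ≤ s ^ (k:ℝ) := by
      have := Real.rpow_le_rpow_of_exponent_le h hk1
      rwa [Real.rpow_one] at this
    have h2 := logE_mono hs h1
    linarith [logE_nonneg hsk0]





/-- Forward pointwise pair: with `A(w) = (w/M) log(e+(w/M)^{1/k})^p` and
`B(w) = w log(e+w)^p`, we have `A ≤ B ≤ K A` for `K = M (k(1+log M))^p`,
provided `2^p ≤ M`, `1 ≤ M`, `1 ≤ p`. -/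
private lemma pair_F {k : ℕ} (hk : k ≠ 0) {p M w : ℝ} (hp : 1 ≤ p) (hM : 1 ≤ M)
    (hM2 : (2:ℝ) ^ p ≤ M) (hw : 0 ≤ w) :
    (w / M) * Real.log (Real.exp 1 + (w / M) ^ (1/(k:ℝ))) ^ p
        ≤ w * Real.log (Real.exp 1 + w) ^ p
    ∧ w * Real.log (Real.exp 1 + w) ^ p
        ≤ M * ((k:ℝ) * (1 + Real.log M)) ^ p *
          ((w / M) * Real.log (Real.exp 1 + (w / M) ^ (1/(k:ℝ))) ^ p) := by
  have hM0 : 0 < M := lt_of_lt_of_le zero_lt_one hM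
  have hwM : 0 ≤ w / M := div_nonneg hw hM0.le
  have hp0 : (0:ℝ) ≤ p := by linarith
  set z := (w / M) ^ (1/(k:ℝ)) with hz
  have hz0 : 0 ≤ z := Real.rpow_nonneg hwM _
  set L' := Real.log (Real.exp 1 + z) with hL'
  set Lw := Real.log (Real.exp 1 + w) with hLw
  have hL'0 : 0 ≤ L' := logE_nonneg hz0
  have hLw0 : 0 ≤ Lw := logE_nonneg hw
  constructor
  · -- A ≤ B
    have h1 : L' ≤ 2 * Real.log (Real.exp 1 + w / M) := logE_rpow_inv_le_two hk hwM
    have h2 : Real.log (Real.exp 1 + w / M) ≤ Lw := logE_mono hwM (div_le_self hw hM)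
    have h3 : L' ≤ 2 * Lw := by linarith
    have h4 : L' ^ p ≤ (2 * Lw) ^ p := Real.rpow_le_rpow hL'0 h3 hp0
    have h5 : (2 * Lw) ^ p = 2 ^ p * Lw ^ p := Real.mul_rpow (by norm_num) hLw0
    have h6 : (w / M) * L' ^ p ≤ (w / M) * (2 ^ p * Lw ^ p) := by
      apply mul_le_mul_of_nonneg_left _ hwM; rw [← h5]; exact h4
    have h7 : (w / M) * (2 ^ p * Lw ^ p) = ((w / M) * 2 ^ p) * Lw ^ p := by ring
    have h8 : (w / M) * 2 ^ p ≤ w := by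
      calc (w / M) * 2 ^ p ≤ (w / M) * M := mul_le_mul_of_nonneg_left hM2 hwM
        _ = w := div_mul_cancel₀ w hM0.ne'
    calc (w / M) * L' ^ p ≤ ((w / M) * 2 ^ p) * Lw ^ p := by rw [← h7]; exact h6
      _ ≤ w * Lw ^ p := mul_le_mul_of_nonneg_right h8 (Real.rpow_nonneg hLw0 _)
  · -- B ≤ K A
    have h1 : Lw ≤ (1 + Real.log M) * Real.log (Real.exp 1 + w / M) := logE_le_div hM hw
    have h2 : Real.log (Real.exp 1 + w / M) ≤ (k:ℝ) * L' := logE_le_k_rpow_inv hk hwM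
    have hlM : 0 ≤ 1 + Real.log M := by linarith [Real.log_nonneg hM]
    have h3 : Lw ≤ ((k:ℝ) * (1 + Real.log M)) * L' := by nlinarith
    have hc0 : (0:ℝ) ≤ (k:ℝ) * (1 + Real.log M) := by positivity
    have h4 : Lw ^ p ≤ (((k:ℝ) * (1 + Real.log M)) * L') ^ p :=
      Real.rpow_le_rpow hLw0 h3 hp0
    have h5 : (((k:ℝ) * (1 + Real.log M)) * L') ^ p
        = ((k:ℝ) * (1 + Real.log M)) ^ p * L' ^ p := Real.mul_rpow hc0 hL'0
    have h6 : w * Lw ^ p ≤ w * (((k:ℝ) * (1 + Real.log M)) ^ p * L' ^ p) := by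
      apply mul_le_mul_of_nonneg_left _ hw; rw [← h5]; exact h4
    have h7 : M * ((k:ℝ) * (1 + Real.log M)) ^ p * ((w / M) * L' ^ p)
        = w * (((k:ℝ) * (1 + Real.log M)) ^ p * L' ^ p) := by
      field_simp
    rw [h7]; exact h6

/-- Reverse pointwise pair: with `A'(s) = (s^k/M) log(e+s^k/M)^p` and
`B'(s) = s^k log(e+s)^p`, we have `A' ≤ B' ≤ K' A'` for `K' = M (2(1+log M))^p`,
provided `k^p ≤ M`, `1 ≤ M`, `1 ≤ p`. -/
private lemma pair_R {k : ℕ} (hk : k ≠ 0) {p M s : ℝ} (hp : 1 ≤ p) (hM : 1 ≤ M)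
    (hMk : ((k:ℝ)) ^ p ≤ M) (hs : 0 ≤ s) :
    (s ^ (k:ℝ) / M) * Real.log (Real.exp 1 + s ^ (k:ℝ) / M) ^ p
        ≤ s ^ (k:ℝ) * Real.log (Real.exp 1 + s) ^ p
    ∧ s ^ (k:ℝ) * Real.log (Real.exp 1 + s) ^ p
        ≤ M * (2 * (1 + Real.log M)) ^ p *
          ((s ^ (k:ℝ) / M) * Real.log (Real.exp 1 + s ^ (k:ℝ) / M) ^ p) := by
  have hM0 : 0 < M := lt_of_lt_of_le zero_lt_one hM
  have hp0 : (0:ℝ) ≤ p := by linarith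
  have hsk : 0 ≤ s ^ (k:ℝ) := Real.rpow_nonneg hs _
  have hskM : 0 ≤ s ^ (k:ℝ) / M := div_nonneg hsk hM0.le
  set L' := Real.log (Real.exp 1 + s ^ (k:ℝ) / M) with hL'
  set Ls := Real.log (Real.exp 1 + s) with hLs
  have hL'0 : 0 ≤ L' := logE_nonneg hskM
  have hLs0 : 0 ≤ Ls := logE_nonneg hs
  constructor
  · have h1 : L' ≤ Real.log (Real.exp 1 + s ^ (k:ℝ)) :=
      logE_mono hskM (div_le_self hsk hM)
    have h2 : Real.log (Real.exp 1 + s ^ (k:ℝ)) ≤ (k:ℝ) * Ls := logE_rpow_le_k hk hs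
    have h3 : L' ≤ (k:ℝ) * Ls := by linarith
    have h4 : L' ^ p ≤ ((k:ℝ) * Ls) ^ p := Real.rpow_le_rpow hL'0 h3 hp0
    have h5 : ((k:ℝ) * Ls) ^ p = (k:ℝ) ^ p * Ls ^ p :=
      Real.mul_rpow (Nat.cast_nonneg k) hLs0
    have h6 : (s ^ (k:ℝ) / M) * L' ^ p ≤ (s ^ (k:ℝ) / M) * ((k:ℝ) ^ p * Ls ^ p) := by
      apply mul_le_mul_of_nonneg_left _ hskM; rw [← h5]; exact h4
    have h8 : (s ^ (k:ℝ) / M) * (k:ℝ) ^ p ≤ s ^ (k:ℝ) := by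
      calc (s ^ (k:ℝ) / M) * (k:ℝ) ^ p ≤ (s ^ (k:ℝ) / M) * M :=
            mul_le_mul_of_nonneg_left hMk hskM
        _ = s ^ (k:ℝ) := div_mul_cancel₀ _ hM0.ne'
    calc (s ^ (k:ℝ) / M) * L' ^ p ≤ ((s ^ (k:ℝ) / M) * (k:ℝ) ^ p) * Ls ^ p := by
          rw [mul_assoc]; exact h6
      _ ≤ s ^ (k:ℝ) * Ls ^ p := mul_le_mul_of_nonneg_right h8 (Real.rpow_nonneg hLs0 _)
  · have h1 : Ls ≤ 2 * Real.log (Real.exp 1 + s ^ (k:ℝ)) := logE_le_two_rpow hk hs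
    have h2 : Real.log (Real.exp 1 + s ^ (k:ℝ)) ≤ (1 + Real.log M) * L' := by
      have := logE_le_div hM hsk
      exact this
    have hlM : 0 ≤ 1 + Real.log M := by linarith [Real.log_nonneg hM]
    have h3 : Ls ≤ (2 * (1 + Real.log M)) * L' := by nlinarith
    have hc0 : (0:ℝ) ≤ 2 * (1 + Real.log M) := by positivity
    have h4 : Ls ^ p ≤ ((2 * (1 + Real.log M)) * L') ^ p :=
      Real.rpow_le_rpow hLs0 h3 hp0
    have h5 : ((2 * (1 + Real.log M)) * L') ^ p
        = (2 * (1 + Real.log M)) ^ p * L' ^ p := Real.mul_rpow hc0 hL'0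
    have h6 : s ^ (k:ℝ) * Ls ^ p ≤ s ^ (k:ℝ) * ((2 * (1 + Real.log M)) ^ p * L' ^ p) := by
      apply mul_le_mul_of_nonneg_left _ hsk; rw [← h5]; exact h4
    have h7 : M * (2 * (1 + Real.log M)) ^ p * ((s ^ (k:ℝ) / M) * L' ^ p)
        = s ^ (k:ℝ) * ((2 * (1 + Real.log M)) ^ p * L' ^ p) := by
      field_simp
    rw [h7]; exact h6



private lemma integral_transfer {n : ℕ} {Q : Set (Rn n)} {f g : Rn n → ℝ} {K vol : ℝ}
    (hvol : 0 ≤ vol)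
    (hgm : AEStronglyMeasurable g (volume.restrict Q))
    (hf0 : ∀ x, 0 ≤ f x) (hfg : ∀ x, f x ≤ g x) (hgK : ∀ x, g x ≤ K * f x)
    (hg : ∫ x in Q, g x ≤ vol) : ∫ x in Q, f x ≤ vol := by
  by_cases hif : IntegrableOn f Q volume
  · have hgi : IntegrableOn g Q volume := by
      refine Integrable.mono' (hif.const_mul K) hgm (ae_of_all _ fun x => ?_)
      rw [Real.norm_eq_abs, abs_of_nonneg (le_trans (hf0 x) (hfg x))]
      exact hgK x
    calc ∫ x in Q, f x ≤ ∫ x in Q, g x := integral_mono_ae hif hgi (ae_of_all _ hfg)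
      _ ≤ vol := hg
  · rw [integral_undef hif]; exact hvol

private lemma lux_mem_transfer {n : ℕ} {Q : Set (Rn n)} {vol : ℝ} (hvol : 0 < vol)
    {Φ Ψ : ℝ → ℝ} {f g : Rn n → ℝ} {lam lam' K : ℝ}
    (hlam' : 0 < lam')
    (hgm : AEStronglyMeasurable (fun x => Ψ (|g x| / lam)) (volume.restrict Q))
    (h0 : ∀ x, 0 ≤ Φ (|f x| / lam'))
    (h1 : ∀ x, Φ (|f x| / lam') ≤ Ψ (|g x| / lam))
    (h2 : ∀ x, Ψ (|g x| / lam) ≤ K * Φ (|f x| / lam'))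
    (hmem : lam ∈ {l : ℝ | 0 < l ∧ (1/vol) * ∫ x in Q, Ψ (|g x| / l) ≤ 1}) :
    lam' ∈ {l : ℝ | 0 < l ∧ (1/vol) * ∫ x in Q, Φ (|f x| / l) ≤ 1} := by
  obtain ⟨-, hint⟩ := hmem
  refine ⟨hlam', ?_⟩
  rw [one_div, inv_mul_le_iff₀ hvol, mul_one] at hint ⊢
  exact integral_transfer hvol.le hgm h0 h1 h2 hint

private lemma cube_eq_preimage {n : ℕ} (c : Rn n) (h : ℝ) :
    Cube c h = (MeasurableEquiv.toLp 2 (Fin n → ℝ)).symm ⁻¹'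
      (Set.univ.pi fun i => Icc (c i) (c i + h)) := by
  ext x
  simp [Cube, Set.mem_pi, Icc]

private lemma cube_measurableSet {n : ℕ} (c : Rn n) (h : ℝ) : MeasurableSet (Cube c h) := by
  rw [cube_eq_preimage]
  exact (MeasurableEquiv.toLp 2 (Fin n → ℝ)).symm.measurable
    (MeasurableSet.univ_pi fun i => measurableSet_Icc)

private lemma cube_volume {n : ℕ} (c : Rn n) {h : ℝ} (hh : 0 ≤ h) :
    volume (Cube c h) = ENNReal.ofReal (h ^ n) := by
  rw [cube_eq_preimage,
    (EuclideanSpace.volume_preserving_symm_measurableEquiv_toLp (Fin n)).measure_preimage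
      (MeasurableSet.univ_pi fun i => measurableSet_Icc).nullMeasurableSet,
    volume_pi_pi]
  simp only [Real.volume_Icc, add_sub_cancel_left]
  rw [Finset.prod_const, ENNReal.ofReal_pow hh]
  simp

/-- The pair `(u, M_{Φ_k, kα} u)` with `Φ_k(t) = t log(e+t)^{2k-1}`
satisfies the two-weight bump condition for `[b,I_α]` (with `p = q = k`) in which the
Young function is `A_k(t) = t^k log(e+t)^{2k-1}`, i.e. the log-bump with `δ = 0`. -/
theorem sharp_example_bump_condition {n : ℕ} (α : ℝ) (hα : 0 < α) (hαn : α < n)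
    (k : ℕ) (hk : 1 < k) (hkn : (k : ℝ) < (n : ℝ) / α)
    (B : ℝ → ℝ) (hB : IsYoung B)
    (u : Rn n → ℝ) (hu : ∀ x, 0 ≤ u x) (huloc : MeasureTheory.LocallyIntegrable u)
    (hfin : ∀ᵐ x, fracOrliczMax ((k : ℝ) * α)
      (fun t => t * Real.log (Real.exp 1 + t) ^ (2 * (k : ℝ) - 1)) u x < ⊤) :
    let Φk : ℝ → ℝ := fun t => t * Real.log (Real.exp 1 + t) ^ (2 * (k : ℝ) - 1)
    let Ak : ℝ → ℝ := fun t => t ^ (k : ℝ) * Real.log (Real.exp 1 + t) ^ (2 * (k : ℝ) - 1)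
    ∃ N : ℝ, ∀ (c₀ : Rn n) (h : ℝ), 0 < h →
      (h ^ n) ^ (α / (n : ℝ)) *
        luxNorm Ak c₀ h (fun x => u x ^ (1 / (k : ℝ))) *
        luxNorm B c₀ h
          (fun x => (fracOrliczMax ((k : ℝ) * α) Φk u x).toReal ^ (-(1 / (k : ℝ)))) ≤ N := by
  intro Φk Ak
  -- basic numerics
  have hkne : k ≠ 0 := by omega
  have hkR1 : (1:ℝ) < (k:ℝ) := by exact_mod_cast hk
  have hkne' : (k:ℝ) ≠ 0 := by positivity
  set p : ℝ := 2 * (k:ℝ) - 1 with hpdef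
  have hp1 : 1 ≤ p := by rw [hpdef]; linarith
  set M1 : ℝ := (2:ℝ) ^ p with hM1def
  have hM1_1 : 1 ≤ M1 := by
    calc (1:ℝ) = (2:ℝ) ^ (0:ℝ) := (Real.rpow_zero 2).symm
      _ ≤ M1 := Real.rpow_le_rpow_of_exponent_le one_le_two (by linarith)
  have hM1_0 : 0 < M1 := lt_of_lt_of_le one_pos hM1_1
  set M2 : ℝ := (k:ℝ) ^ p with hM2def
  have hM2_1 : 1 ≤ M2 := by
    calc (1:ℝ) = (k:ℝ) ^ (0:ℝ) := (Real.rpow_zero _).symm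
      _ ≤ M2 := Real.rpow_le_rpow_of_exponent_le hkR1.le (by linarith)
  have hM2_0 : 0 < M2 := lt_of_lt_of_le one_pos hM2_1
  set C : ℝ := M1 ^ (1/(k:ℝ)) with hCdef
  have hC0 : 0 < C := Real.rpow_pos_of_pos hM1_0 _
  -- δ from continuity of B at 0
  have hδex : ∃ δ : ℝ, 0 < δ ∧ ∀ t : ℝ, 0 ≤ t → t ≤ δ → B t ≤ 1 := by
    obtain ⟨hBc, -, -, hB0, -⟩ := hB
    have h2 : Tendsto B (𝓝[Ici 0] (0:ℝ)) (𝓝 (B 0)) := hBc 0 self_mem_Ici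
    rw [hB0] at h2
    have h1 : ∀ᶠ t in 𝓝[Ici 0] (0:ℝ), B t < 1 := h2.eventually_lt_const one_pos
    rw [eventually_nhdsWithin_iff, Metric.eventually_nhds_iff] at h1
    obtain ⟨ε, hε0, hε⟩ := h1
    refine ⟨ε/2, by positivity, fun t ht0 htle => ?_⟩
    have hd : dist t 0 < ε := by
      rw [Real.dist_eq, sub_zero, abs_of_nonneg ht0]; linarith
    exact (hε hd ht0).le
  obtain ⟨δ, hδ0, hδ⟩ := hδex
  have hfin' : ∀ᵐ x, fracOrliczMax ((k:ℝ) * α) Φk u x < ⊤ := hfin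
  refine ⟨C / δ, ?_⟩
  intro c₀ h hh
  have hQm : MeasurableSet (Cube c₀ h) := cube_measurableSet c₀ h
  have hvol0 : (0:ℝ) < h ^ n := by positivity
  set f1 : Rn n → ℝ := fun x => u x ^ (1/(k:ℝ)) with hf1
  set gB : Rn n → ℝ :=
    fun x => (fracOrliczMax ((k:ℝ) * α) Φk u x).toReal ^ (-(1/(k:ℝ))) with hgB
  set S0 : Set ℝ :=
    {l | 0 < l ∧ (1/(h ^ n : ℝ)) * ∫ x in Cube c₀ h, Φk (|u x| / l) ≤ 1} with hS0def
  set S1 : Set ℝ :=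
    {l | 0 < l ∧ (1/(h ^ n : ℝ)) * ∫ x in Cube c₀ h, Ak (|f1 x| / l) ≤ 1} with hS1def
  set S2 : Set ℝ :=
    {l | 0 < l ∧ (1/(h ^ n : ℝ)) * ∫ x in Cube c₀ h, B (|gB x| / l) ≤ 1} with hS2def
  have hL1eq : luxNorm Ak c₀ h f1 = sInf S1 := rfl
  have hL2eq : luxNorm B c₀ h gB = sInf S2 := rfl
  have hL0eq : luxNorm Φk c₀ h u = sInf S0 := rfl
  have hbdd0 : BddBelow S0 := ⟨0, fun l hl => hl.1.le⟩
  have hbdd1 : BddBelow S1 := ⟨0, fun l hl => hl.1.le⟩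
  have hbdd2 : BddBelow S2 := ⟨0, fun l hl => hl.1.le⟩
  have hL0nn : 0 ≤ sInf S0 := Real.sInf_nonneg fun l hl => hl.1.le
  have hL1nn : 0 ≤ sInf S1 := Real.sInf_nonneg fun l hl => hl.1.le
  have hL2nn : 0 ≤ sInf S2 := Real.sInf_nonneg fun l hl => hl.1.le
  set P : ℝ := (h ^ n) ^ (α / (n:ℝ)) with hPdef
  have hP0 : 0 < P := Real.rpow_pos_of_pos hvol0 _
  rw [hL1eq, hL2eq]
  rcases eq_or_lt_of_le hL1nn with hL1z | hL1pos
  · rw [← hL1z, mul_zero, zero_mul]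
    positivity
  -- measurability of the two comparison integrands
  have humeas : AEStronglyMeasurable u (volume.restrict (Cube c₀ h)) :=
    huloc.aestronglyMeasurable.restrict
  have hmeasΦ : ∀ lam : ℝ, 0 < lam →
      AEStronglyMeasurable (fun x => Φk (|u x| / lam)) (volume.restrict (Cube c₀ h)) := by
    intro lam hlam
    have hc1 : Continuous fun t : ℝ => |t| / lam := continuous_abs.div_const lam
    have hc2 : Continuous fun t : ℝ => Real.log (Real.exp 1 + |t| / lam) :=
      (continuous_const.add hc1).log fun t =>
        (add_pos_of_pos_of_nonneg (Real.exp_pos 1) (div_nonneg (abs_nonneg _) hlam.le)).ne'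
    have hG : Continuous fun t : ℝ => Φk (|t| / lam) :=
      hc1.mul (hc2.rpow_const fun t => Or.inr (by linarith))
    exact hG.comp_aestronglyMeasurable humeas
  have hmeasA : ∀ lam : ℝ, 0 < lam →
      AEStronglyMeasurable (fun x => Ak (|f1 x| / lam)) (volume.restrict (Cube c₀ h)) := by
    intro lam hlam
    have hc1 : Continuous fun t : ℝ => |t ^ (1/(k:ℝ))| / lam :=
      ((Real.continuous_rpow_const (by positivity)).abs).div_const lam
    have hc2 : Continuous fun t : ℝ => Real.log (Real.exp 1 + |t ^ (1/(k:ℝ))| / lam) :=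
      (continuous_const.add hc1).log fun t =>
        (add_pos_of_pos_of_nonneg (Real.exp_pos 1) (div_nonneg (abs_nonneg _) hlam.le)).ne'
    have hG : Continuous fun t : ℝ => Ak (|t ^ (1/(k:ℝ))| / lam) :=
      (hc1.rpow_const fun t => Or.inr (by positivity)).mul
        (hc2.rpow_const fun t => Or.inr (by linarith))
    exact hG.comp_aestronglyMeasurable humeas
  -- reverse transfer : S1 → S0
  have hrev : ∀ lam1 ∈ S1, (M2 * lam1 ^ (k:ℝ)) ∈ S0 := by
    intro lam1 hmem
    have hlam1 : 0 < lam1 := hmem.1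
    have hobl : ∀ x : Rn n,
        (0 ≤ Φk (|u x| / (M2 * lam1 ^ (k:ℝ)))) ∧
        Φk (|u x| / (M2 * lam1 ^ (k:ℝ))) ≤ Ak (|f1 x| / lam1) ∧
        Ak (|f1 x| / lam1) ≤ (M2 * (2 * (1 + Real.log M2)) ^ p) *
          Φk (|u x| / (M2 * lam1 ^ (k:ℝ))) := by
      intro x
      have hux := hu x
      set s : ℝ := u x ^ (1/(k:ℝ)) / lam1 with hsx
      have hs0 : 0 ≤ s := div_nonneg (Real.rpow_nonneg hux _) hlam1.le
      have e3 : (u x ^ (1/(k:ℝ))) ^ (k:ℝ) = u x := by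
        rw [← Real.rpow_mul hux, one_div, inv_mul_cancel₀ hkne', Real.rpow_one]
      have e1 : |f1 x| / lam1 = s := by
        rw [hf1]; dsimp only
        rw [abs_of_nonneg (Real.rpow_nonneg hux _)]
      have esk : s ^ (k:ℝ) = u x / lam1 ^ (k:ℝ) := by
        rw [hsx, Real.div_rpow (Real.rpow_nonneg hux _) hlam1.le, e3]
      have e2 : |u x| / (M2 * lam1 ^ (k:ℝ)) = s ^ (k:ℝ) / M2 := by
        rw [abs_of_nonneg hux, esk, div_div, mul_comm M2 (lam1 ^ (k:ℝ))]
      obtain ⟨hA, hB'⟩ := pair_R hkne hp1 hM2_1 (le_refl M2) hs0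
      have hlogE0 : 0 ≤ Real.log (Real.exp 1 + s ^ (k:ℝ) / M2) :=
        logE_nonneg (div_nonneg (Real.rpow_nonneg hs0 _) hM2_0.le)
      refine ⟨?_, ?_, ?_⟩
      · rw [e2]
        exact mul_nonneg (div_nonneg (Real.rpow_nonneg hs0 _) hM2_0.le)
          (Real.rpow_nonneg hlogE0 _)
      · rw [e1, e2]; exact hA
      · rw [e1, e2]; exact hB'
    refine lux_mem_transfer hvol0 (by positivity) (hmeasA lam1 hlam1)
      (fun x => (hobl x).1) (fun x => (hobl x).2.1) (fun x => (hobl x).2.2) hmem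
  -- forward transfer : S0 → S1
  have hfwdmem : ∀ lam0 ∈ S0, (C * lam0 ^ (1/(k:ℝ))) ∈ S1 := by
    intro lam0 hmem
    have hlam0 : 0 < lam0 := hmem.1
    have hobl : ∀ x : Rn n,
        (0 ≤ Ak (|f1 x| / (C * lam0 ^ (1/(k:ℝ))))) ∧
        Ak (|f1 x| / (C * lam0 ^ (1/(k:ℝ)))) ≤ Φk (|u x| / lam0) ∧
        Φk (|u x| / lam0) ≤ (M1 * ((k:ℝ) * (1 + Real.log M1)) ^ p) *
          Ak (|f1 x| / (C * lam0 ^ (1/(k:ℝ)))) := by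
      intro x
      have hux := hu x
      set w : ℝ := u x / lam0 with hw
      have hw0 : 0 ≤ w := div_nonneg hux hlam0.le
      have hwM : 0 ≤ w / M1 := div_nonneg hw0 hM1_0.le
      have earg : |f1 x| / (C * lam0 ^ (1/(k:ℝ))) = (w / M1) ^ (1/(k:ℝ)) := by
        rw [hf1]; dsimp only
        rw [abs_of_nonneg (Real.rpow_nonneg hux _), hCdef,
          ← Real.mul_rpow hM1_0.le hlam0.le,
          ← Real.div_rpow hux (by positivity), hw, div_div,
          mul_comm M1 lam0]
      have e4 : ((w / M1) ^ (1/(k:ℝ))) ^ (k:ℝ) = w / M1 := by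
        rw [← Real.rpow_mul hwM, one_div, inv_mul_cancel₀ hkne', Real.rpow_one]
      have e5 : Ak (|f1 x| / (C * lam0 ^ (1/(k:ℝ))))
          = (w / M1) * Real.log (Real.exp 1 + (w / M1) ^ (1/(k:ℝ))) ^ p := by
        rw [earg]
        show ((w / M1) ^ (1/(k:ℝ))) ^ (k:ℝ) * _ = _
        rw [e4]
      have e6 : |u x| / lam0 = w := by rw [abs_of_nonneg hux, hw]
      obtain ⟨hA, hB'⟩ := pair_F hkne hp1 hM1_1 (le_refl M1) hw0
      have hlogE0 : 0 ≤ Real.log (Real.exp 1 + (w / M1) ^ (1/(k:ℝ))) :=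
        logE_nonneg (Real.rpow_nonneg hwM _)
      refine ⟨?_, ?_, ?_⟩
      · rw [e5]
        exact mul_nonneg hwM (Real.rpow_nonneg hlogE0 _)
      · rw [e5, e6]; exact hA
      · rw [e5, e6]; exact hB'
    refine lux_mem_transfer hvol0 (by positivity) (hmeasΦ lam0 hlam0)
      (fun x => (hobl x).1) (fun x => (hobl x).2.1) (fun x => (hobl x).2.2) hmem
  -- S1 nonempty, hence S0 nonempty
  have hS1ne : S1.Nonempty := by
    by_contra hne
    rw [Set.not_nonempty_iff_eq_empty] at hne
    rw [hne, Real.sInf_empty] at hL1pos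
    exact lt_irrefl 0 hL1pos
  obtain ⟨lam1, hlam1mem⟩ := hS1ne
  have hS0ne : S0.Nonempty := ⟨_, hrev lam1 hlam1mem⟩
  -- lower bound for sInf S0
  have hlow : (sInf S1 / C) ^ (k:ℝ) ≤ sInf S0 := by
    apply le_csInf hS0ne
    intro lam0 hl
    have h1 : sInf S1 ≤ C * lam0 ^ (1/(k:ℝ)) := csInf_le hbdd1 (hfwdmem lam0 hl)
    have h2 : sInf S1 / C ≤ lam0 ^ (1/(k:ℝ)) := by
      rw [div_le_iff₀ hC0]; rw [mul_comm] at h1; exact h1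
    have h3 : (sInf S1 / C) ^ (k:ℝ) ≤ (lam0 ^ (1/(k:ℝ))) ^ (k:ℝ) :=
      Real.rpow_le_rpow (div_nonneg hL1nn hC0.le) h2 (by positivity)
    rwa [← Real.rpow_mul hl.1.le, one_div, inv_mul_cancel₀ hkne', Real.rpow_one] at h3
  have hL0pos : 0 < sInf S0 :=
    lt_of_lt_of_le (Real.rpow_pos_of_pos (div_pos hL1pos hC0) _) hlow
  set R : ℝ := (sInf S0) ^ (1/(k:ℝ)) with hRdef
  have hR0 : 0 < R := Real.rpow_pos_of_pos hL0pos _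
  -- L1 bound
  have hL1le : sInf S1 ≤ C * R := by
    have h6 : ((sInf S1 / C) ^ (k:ℝ)) ^ (1/(k:ℝ)) ≤ (sInf S0) ^ (1/(k:ℝ)) :=
      Real.rpow_le_rpow (Real.rpow_nonneg (div_nonneg hL1nn hC0.le) _) hlow (by positivity)
    rw [← Real.rpow_mul (div_nonneg hL1nn hC0.le), mul_one_div, div_self hkne',
      Real.rpow_one] at h6
    rw [div_le_iff₀ hC0] at h6
    calc sInf S1 ≤ (sInf S0) ^ (1/(k:ℝ)) * C := h6
      _ = C * R := by rw [hRdef, mul_comm]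
  -- L2 bound
  set lamstar : ℝ := (P * R)⁻¹ * δ⁻¹ with hlamstar
  have hlamstar0 : 0 < lamstar := by positivity
  have hmem2 : lamstar ∈ S2 := by
    refine ⟨hlamstar0, ?_⟩
    rw [one_div, inv_mul_le_iff₀ hvol0, mul_one]
    by_cases hIB : IntegrableOn (fun x => B (|gB x| / lamstar)) (Cube c₀ h) volume
    · have hQvol : volume (Cube c₀ h) = ENNReal.ofReal (h ^ n) := cube_volume c₀ hh.le
      have hQfin : volume (Cube c₀ h) < ⊤ := by rw [hQvol]; exact ENNReal.ofReal_lt_top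
      have hae : ∀ᵐ x ∂(volume.restrict (Cube c₀ h)), B (|gB x| / lamstar) ≤ 1 := by
        filter_upwards [ae_restrict_of_ae hfin', ae_restrict_mem hQm] with x hfx hxQ
        set m : ℝ := (h ^ n) ^ (((k:ℝ) * α) / (n:ℝ)) * sInf S0 with hmdef
        have hm0 : 0 < m := mul_pos (Real.rpow_pos_of_pos hvol0 _) hL0pos
        have hlow2 : ENNReal.ofReal m ≤ fracOrliczMax ((k:ℝ) * α) Φk u x := by
          have e0 : luxNorm Φk c₀ h u = sInf S0 := hL0eq
          rw [hmdef, ← e0]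
          show ENNReal.ofReal ((h ^ n) ^ (((k:ℝ) * α) / (n:ℝ)) * luxNorm Φk c₀ h u)
            ≤ fracOrliczMax ((k:ℝ) * α) Φk u x
          unfold fracOrliczMax
          exact le_iSup_of_le c₀ (le_iSup_of_le h (by rw [iSup_pos hh, iSup_pos hxQ]))
        have hmle : m ≤ (fracOrliczMax ((k:ℝ) * α) Φk u x).toReal := by
          have := ENNReal.toReal_mono hfx.ne hlow2
          rwa [ENNReal.toReal_ofReal hm0.le] at this
        have hT0 : 0 < (fracOrliczMax ((k:ℝ) * α) Φk u x).toReal :=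
          lt_of_lt_of_le hm0 hmle
        have hn0' : (n:ℝ) ≠ 0 := by
          have : (0:ℝ) < (n:ℝ) := lt_trans hα hαn
          exact this.ne'
        have hexp : ((k:ℝ) * α) / (n:ℝ) * (1/(k:ℝ)) = α / (n:ℝ) := by
          field_simp
        have hmk : m ^ (1/(k:ℝ)) = P * R := by
          rw [hmdef, Real.mul_rpow (Real.rpow_nonneg hvol0.le _) hL0pos.le,
            ← Real.rpow_mul hvol0.le, hexp, hRdef, hPdef]
        have hgle : gB x ≤ (P * R)⁻¹ := by
          rw [hgB]; dsimp only
          rw [Real.rpow_neg hT0.le]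
          have h7 : m ^ (1/(k:ℝ)) ≤ ((fracOrliczMax ((k:ℝ) * α) Φk u x).toReal) ^ (1/(k:ℝ)) :=
            Real.rpow_le_rpow hm0.le hmle (by positivity)
          rw [hmk] at h7
          exact inv_anti₀ (by positivity) h7
        have hg0 : 0 ≤ gB x := by
          rw [hgB]; dsimp only
          exact Real.rpow_nonneg ENNReal.toReal_nonneg _
        have hdle : |gB x| / lamstar ≤ δ := by
          rw [abs_of_nonneg hg0, div_le_iff₀ hlamstar0]
          have hds : δ * lamstar = (P * R)⁻¹ := by
            rw [hlamstar, mul_comm (P * R)⁻¹ δ⁻¹, ← mul_assoc,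
              mul_inv_cancel₀ hδ0.ne', one_mul]
          rw [hds]
          exact hgle
        exact hδ _ (div_nonneg (abs_nonneg _) hlamstar0.le) hdle
      calc ∫ x in Cube c₀ h, B (|gB x| / lamstar)
          ≤ ∫ _x in Cube c₀ h, (1:ℝ) :=
            integral_mono_ae hIB (integrableOn_const hQfin.ne) hae
        _ = (volume (Cube c₀ h)).toReal • (1:ℝ) := setIntegral_const 1
        _ = h ^ n := by
            rw [hQvol, ENNReal.toReal_ofReal hvol0.le, smul_eq_mul, mul_one]
    · rw [integral_undef hIB]
      exact hvol0.le
  have hL2le : sInf S2 ≤ lamstar := csInf_le hbdd2 hmem2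
  -- combine
  calc P * sInf S1 * sInf S2 ≤ P * (C * R) * lamstar := by
        refine mul_le_mul ?_ hL2le hL2nn (by positivity)
        exact mul_le_mul_of_nonneg_left hL1le hP0.le
    _ = C / δ := by
        rw [hlamstar]
        field_simp


end Paper
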